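/- arXiv:0904.0039 — 4 statements merged into one kernel-verified Lean document; each statement's English description precedes it below -/
import Mathlib

section
/- Let C be a nodal curve of genus g ≥ 2 and e_bar a multidegree of total degree e. If e_bar is semistable at every nonempty connected proper subcurve Y containing a fixed component X, then e_bar is semistable at every nonempty connected proper subcurve of C. -/
open Finset

/-- An abstract (combinatorial) model of a nodal curve: a finite set of irreducible
components `V` (with geometric genus `w v`), and a finite set of nodes `N`, each node
lying on the (unordered pair of) components recorded by `ends`. -/
structure NodalCurve where
  V : Type
  N : Type
  [instFV : Fintype V]
  [instDV : DecidableEq V]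
  [instFN : Fintype N]
  [instDN : DecidableEq N]
  ends : N → Sym2 V
  w : V → ℕ

namespace NodalCurve

variable (C : NodalCurve)

instance : Fintype C.V := C.instFV
instance : DecidableEq C.V := C.instDV
instance : Fintype C.N := C.instFN
instance : DecidableEq C.N := C.instDN

/-- The dual graph of the curve (as a simple graph on the components). -/
def graph : SimpleGraph C.V :=
  SimpleGraph.fromRel (fun u v => ∃ n, C.ends n = s(u, v))

/-- The number of branches (ends) of the node `n` lying on the subcurve `S`. -/
def endsIn (S : Finset C.V) (n : C.N) : ℕ :=
  Sym2.lift ⟨fun a b => (if a ∈ S then 1 else 0) + (if b ∈ S then 1 else 0),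
    fun _ _ => add_comm _ _⟩ (C.ends n)

/-- `k S = #(Y ∩ Y')`: the number of nodes where the subcurve `S` meets its complement. -/
def k (S : Finset C.V) : ℕ := (univ.filter fun n => C.endsIn S n = 1).card

/-- nodes both of whose branches lie on `S`. -/
def internalNodes (S : Finset C.V) : ℕ := (univ.filter fun n => C.endsIn S n = 2).card

/-- The (arithmetic) genus of the curve. -/
def genus : ℤ :=
  ∑ v, (C.w v : ℤ) + (Fintype.card C.N : ℤ) - (Fintype.card C.V : ℤ) + 1

/-- The genus `1 - χ(O_Y)` of a (connected) subcurve with components `S`. -/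
def genusSub (S : Finset C.V) : ℤ :=
  ∑ v ∈ S, (C.w v : ℤ) + (C.internalNodes S : ℤ) - (S.card : ℤ) + 1

/-- `χ(O_Y)` for the subcurve `Y` with components `S`. -/
def chiO (S : Finset C.V) : ℤ :=
  (S.card : ℤ) - ∑ v ∈ S, (C.w v : ℤ) - (C.internalNodes S : ℤ)

/-- The degree of `ω_C` restricted to the subcurve with components `S`. -/
def degω (S : Finset C.V) : ℤ :=
  ∑ v ∈ S, (2 * (C.w v : ℤ) - 2) + ∑ n, (C.endsIn S n : ℤ)

/-- Connectedness of the subcurve with components `S`. -/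
def connectedSub (S : Finset C.V) : Prop := (C.graph.induce (S : Set C.V)).Connected

/-- Connectedness of the curve. -/
def Conn : Prop := C.graph.Connected

/-- The curve is of compact type: every node is separating, i.e. the dual graph
(with its multiple edges and loops) is a tree. -/
def CompactType : Prop :=
  Function.Injective C.ends ∧ (∀ n, ¬ (C.ends n).IsDiag) ∧ C.graph.IsTree

/-- Deligne–Mumford stability. -/
def Stable : Prop := ∀ v, 0 < 2 * (C.w v : ℤ) - 2 + ∑ n, (C.endsIn {v} n : ℤ)

/-- A tail: a subcurve meeting its complement in exactly one node. -/
def isTail (S : Finset C.V) : Prop := C.k S = 1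

/-- The degree `d_Y` of a multidegree `e` on the subcurve with components `S`. -/
def degSub (e : C.V → ℤ) (S : Finset C.V) : ℤ := ∑ v ∈ S, e v

/-- The total degree of a multidegree. -/
def totalDeg (e : C.V → ℤ) : ℤ := ∑ v, e v

/-- Semistability (w.r.t. the canonical polarization) at the subcurve `S`:
`|d_Y - d·deg(ω_C|_Y)/(2g-2)| ≤ k_Y/2`. -/
def semistableAt (e : C.V → ℤ) (S : Finset C.V) : Prop :=
  |(C.degSub e S : ℚ) - (C.totalDeg e : ℚ) * (C.degω S : ℚ) / (2 * (C.genus : ℚ) - 2)|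
    ≤ (C.k S : ℚ) / 2

/-- The strict lower inequality of quasistability at the subcurve `S`:
`d_Y - d·deg(ω_C|_Y)/(2g-2) > -k_Y/2`. -/
def quasistableLowAt (e : C.V → ℤ) (S : Finset C.V) : Prop :=
  -((C.k S : ℚ) / 2) <
    (C.degSub e S : ℚ) - (C.totalDeg e : ℚ) * (C.degω S : ℚ) / (2 * (C.genus : ℚ) - 2)

/-- A semistable multidegree. -/
def semistable (e : C.V → ℤ) : Prop :=
  ∀ S : Finset C.V, S.Nonempty → S ≠ univ → C.semistableAt e S

/-- An `X`-quasistable multidegree. -/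
def Xquasistable (X : C.V) (e : C.V → ℤ) : Prop :=
  C.semistable e ∧
    ∀ S : Finset C.V, S.Nonempty → S ≠ univ → X ∈ S → C.quasistableLowAt e S

/-- A `d̄`-big tail: `d_Z·deg(ω_C) - d·deg(ω_C|_Z) < 2g_Z - g`. -/
def isBigTail (e : C.V → ℤ) (S : Finset C.V) : Prop :=
  C.isTail S ∧
    C.degSub e S * (2 * C.genus - 2) - C.totalDeg e * C.degω S
      < 2 * C.genusSub S - C.genus

/-- `S` is (the set of components of) a connected component of the complement `X'`
of the irreducible component `x`. -/
def complComponent (x : C.V) (S : Finset C.V) : Prop :=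
  x ∉ S ∧ S.Nonempty ∧ C.connectedSub S ∧
    ∀ u ∈ S, ∀ v : C.V, C.graph.Adj u v → v ≠ x → v ∈ S

/-- `T` is (the set of components of) a connected component of the subcurve `S`. -/
def subComponent (S T : Finset C.V) : Prop :=
  T ⊆ S ∧ T.Nonempty ∧ C.connectedSub T ∧
    ∀ u ∈ T, ∀ v ∈ S, C.graph.Adj u v → v ∈ T

/-- A central component: every connected component `Z` of `X'` has `g_Z < g/2`. -/
def central (x : C.V) : Prop :=
  ∀ S : Finset C.V, C.complComponent x S → 2 * C.genusSub S < C.genus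

/-- A semicentral component: every connected component `Z` of `X'` has `g_Z ≤ g/2`. -/
def semicentral (x : C.V) : Prop :=
  ∀ S : Finset C.V, C.complComponent x S → 2 * C.genusSub S ≤ C.genus

end NodalCurve

namespace NodalCurve

variable (C : NodalCurve)

open Finset

lemma adj_of_node {n : C.N} {a b : C.V} (hab : C.ends n = s(a, b)) (hne : a ≠ b) :
    C.graph.Adj a b := by
  rw [graph, SimpleGraph.fromRel_adj]
  exact ⟨hne, Or.inl ⟨n, hab⟩⟩

/-- Reachability through vertices of `S`. -/
def Linked (S : Finset C.V) (u v : C.V) : Prop :=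
  Relation.ReflTransGen (fun a b => a ∈ S ∧ b ∈ S ∧ C.graph.Adj a b) u v

lemma linked_symm {S : Finset C.V} {u v : C.V} (h : C.Linked S u v) : C.Linked S v u :=
  Relation.ReflTransGen.mono
    (fun _ _ hab => ⟨hab.2.1, hab.1, hab.2.2.symm⟩) _ _ (Relation.ReflTransGen.swap _ _ h)

lemma linked_mono {S T : Finset C.V} (hST : S ⊆ T) {u v : C.V} (h : C.Linked S u v) :
    C.Linked T u v :=
  Relation.ReflTransGen.mono (fun _ _ hab => ⟨hST hab.1, hST hab.2.1, hab.2.2⟩) _ _ h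

lemma linked_of_connectedSub {S : Finset C.V} (hS : C.connectedSub S) {u v : C.V}
    (hu : u ∈ S) (hv : v ∈ S) : C.Linked S u v := by
  have hc : (C.graph.induce (S : Set C.V)).Connected := hS
  have hr := (SimpleGraph.reachable_iff_reflTransGen _ _).mp
    (hc.preconnected ⟨u, by simpa using hu⟩ ⟨v, by simpa using hv⟩)
  exact Relation.ReflTransGen.lift
    (p := fun a b => a ∈ S ∧ b ∈ S ∧ C.graph.Adj a b) (Subtype.val)
    (fun (a b : (S : Set C.V)) (hab : (C.graph.induce (S : Set C.V)).Adj a b) =>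
      ⟨Finset.mem_coe.mp a.2, Finset.mem_coe.mp b.2, by simpa using hab⟩) _ _ hr

lemma connectedSub_of_linked {S : Finset C.V} (hne : S.Nonempty)
    (h : ∀ u ∈ S, ∀ v ∈ S, C.Linked S u v) : C.connectedSub S := by
  rw [connectedSub, SimpleGraph.connected_iff]
  obtain ⟨x, hx⟩ := hne
  refine ⟨?_, ⟨⟨x, by simpa using hx⟩⟩⟩
  rintro ⟨u, hu⟩ ⟨v, hv⟩
  have hl := h u (Finset.mem_coe.mp hu) v (Finset.mem_coe.mp hv)
  clear h hx
  induction hl with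
  | refl => rfl
  | tail _hprev step ih =>
      rename_i b _
      exact (ih (Finset.mem_coe.mpr step.1)).trans
        (SimpleGraph.Adj.reachable (by simpa using step.2.2))

lemma connectedSub_of_pivot {S : Finset C.V} {x : C.V} (hx : x ∈ S)
    (h : ∀ v ∈ S, C.Linked S x v) : C.connectedSub S :=
  C.connectedSub_of_linked ⟨x, hx⟩
    (fun u hu v hv => (C.linked_symm (h u hu)).trans (h v hv))

lemma linked_mem_closed {W B : Finset C.V} (hB : C.subComponent W B) {x y : C.V}
    (hx : x ∈ B) (hl : C.Linked W x y) : y ∈ B := by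
  induction hl with
  | refl => exact hx
  | tail _hprev step ih => exact hB.2.2.2 _ ih _ step.2.1 step.2.2

lemma exists_subComponent {W : Finset C.V} {b : C.V} (hb : b ∈ W) :
    ∃ T, C.subComponent W T ∧ b ∈ T := by
  classical
  refine ⟨W.filter (fun v => C.Linked W b v), ⟨filter_subset _ _, ⟨b, ?_⟩, ?_, ?_⟩, ?_⟩
  · exact mem_filter.mpr ⟨hb, Relation.ReflTransGen.refl⟩
  · -- connectedness
    refine C.connectedSub_of_pivot (x := b) (mem_filter.mpr ⟨hb, Relation.ReflTransGen.refl⟩) ?_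
    intro v hv
    have hv' := (mem_filter.mp hv).2
    -- show the whole chain stays inside the filter
    clear hv
    induction hv' with
    | refl => exact Relation.ReflTransGen.refl
    | tail hprev step ih =>
        rename_i b' c
        exact ih.tail ⟨mem_filter.mpr ⟨step.1, hprev⟩,
          mem_filter.mpr ⟨step.2.1, hprev.tail step⟩, step.2.2⟩
  · intro u hu v hv hadj
    exact mem_filter.mpr ⟨hv, (mem_filter.mp hu).2.tail ⟨(mem_filter.mp hu).1, hv, hadj⟩⟩
  · exact mem_filter.mpr ⟨hb, Relation.ReflTransGen.refl⟩

lemma exists_boundary (hconn : C.Conn) {T : Finset C.V} (hne : T.Nonempty)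
    (hT : T ≠ univ) : ∃ a ∈ T, ∃ b, b ∉ T ∧ C.graph.Adj a b := by
  obtain ⟨u, hu⟩ := hne
  obtain ⟨v, hv⟩ : ∃ v, v ∉ T := by
    by_contra hcon; push_neg at hcon; exact hT (eq_univ_iff_forall.mpr hcon)
  have hr : Relation.ReflTransGen C.graph.Adj u v :=
    (SimpleGraph.reachable_iff_reflTransGen _ _).mp
      ((show C.graph.Connected from hconn).preconnected u v)
  clear hconn
  induction hr using Relation.ReflTransGen.head_induction_on with
  | refl => exact absurd hu hv
  | head hadj _hrest ih =>
      rename_i a c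
      by_cases hc : c ∈ T
      · exact ih hc
      · exact ⟨a, hu, c, hc, hadj⟩

lemma ends_rep (n : C.N) : ∃ a b, C.ends n = s(a, b) := by
  obtain ⟨⟨a, b⟩, h⟩ := Quot.exists_rep (C.ends n)
  exact ⟨a, b, h.symm⟩

lemma endsIn_eq {n : C.N} {a b : C.V} (hab : C.ends n = s(a, b)) (S : Finset C.V) :
    C.endsIn S n = (if a ∈ S then 1 else 0) + (if b ∈ S then 1 else 0) := by
  rw [endsIn, hab, Sym2.lift_mk]

lemma endsIn_union {S T : Finset C.V} (hd : Disjoint S T) (n : C.N) :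
    C.endsIn (S ∪ T) n = C.endsIn S n + C.endsIn T n := by
  obtain ⟨a, b, hab⟩ := C.ends_rep n
  rw [C.endsIn_eq hab, C.endsIn_eq hab, C.endsIn_eq hab]
  have ha : a ∈ S → a ∉ T := fun h => Finset.disjoint_left.mp hd h
  have hb : b ∈ S → b ∉ T := fun h => Finset.disjoint_left.mp hd h
  by_cases h1 : a ∈ S <;> by_cases h2 : a ∈ T <;> by_cases h3 : b ∈ S <;> by_cases h4 : b ∈ T
  all_goals first
    | exact absurd h2 (ha h1)
    | exact absurd h4 (hb h3)
    | simp [Finset.mem_union, h1, h2, h3, h4]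

lemma endsIn_univ (n : C.N) : C.endsIn univ n = 2 := by
  obtain ⟨a, b, hab⟩ := C.ends_rep n
  rw [C.endsIn_eq hab]; simp

lemma endsIn_add_compl (S : Finset C.V) (n : C.N) :
    C.endsIn S n + C.endsIn Sᶜ n = 2 := by
  rw [← C.endsIn_union disjoint_compl_right, Finset.union_compl, C.endsIn_univ]

lemma k_compl (S : Finset C.V) : C.k Sᶜ = C.k S := by
  unfold k
  congr 1
  ext n
  have := C.endsIn_add_compl S n
  simp only [mem_filter, mem_univ, true_and]
  omega

lemma degSub_union (e : C.V → ℤ) {S T : Finset C.V} (hd : Disjoint S T) :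
    C.degSub e (S ∪ T) = C.degSub e S + C.degSub e T := by
  rw [degSub, degSub, degSub, Finset.sum_union hd]

lemma degSub_add_compl (e : C.V → ℤ) (S : Finset C.V) :
    C.degSub e S + C.degSub e Sᶜ = C.totalDeg e :=
  Finset.sum_add_sum_compl S e

lemma degω_union {S T : Finset C.V} (hd : Disjoint S T) :
    C.degω (S ∪ T) = C.degω S + C.degω T := by
  rw [degω, degω, degω, Finset.sum_union hd]
  have : ∀ n, ((C.endsIn (S ∪ T) n : ℤ)) = (C.endsIn S n : ℤ) + (C.endsIn T n : ℤ) := by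
    intro n; rw [C.endsIn_union hd]; push_cast; ring
  rw [Finset.sum_congr rfl (fun n _ => this n), Finset.sum_add_distrib]
  ring

lemma degω_univ : C.degω univ = 2 * C.genus - 2 := by
  have h1 : ∑ n : C.N, (C.endsIn univ n : ℤ) = 2 * (Fintype.card C.N : ℤ) := by
    simp [C.endsIn_univ, Finset.card_univ]
    ring
  have h2 : ∑ v : C.V, (2 * (C.w v : ℤ) - 2)
      = 2 * (∑ v : C.V, (C.w v : ℤ)) - 2 * (Fintype.card C.V : ℤ) := by
    rw [Finset.sum_sub_distrib, ← Finset.mul_sum]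
    simp [Finset.card_univ, mul_comm]
  rw [degω, genus, h1, h2]
  ring

lemma degω_add_compl (S : Finset C.V) : C.degω S + C.degω Sᶜ = 2 * C.genus - 2 := by
  rw [← C.degω_union disjoint_compl_right, Finset.union_compl, C.degω_univ]

/-- The quantity whose absolute value is bounded in `semistableAt`. -/
def sf (e : C.V → ℤ) (S : Finset C.V) : ℚ :=
  (C.degSub e S : ℚ) - (C.totalDeg e : ℚ) * (C.degω S : ℚ) / (2 * (C.genus : ℚ) - 2)

lemma semistableAt_iff (e : C.V → ℤ) (S : Finset C.V) :
    C.semistableAt e S ↔ |C.sf e S| ≤ (C.k S : ℚ) / 2 := Iff.rfl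

lemma genus_ne (hg : 2 ≤ C.genus) : (2 * (C.genus : ℚ) - 2) ≠ 0 := by
  have : (2 : ℚ) ≤ (C.genus : ℚ) := by exact_mod_cast hg
  nlinarith

lemma sf_compl (hg : 2 ≤ C.genus) (e : C.V → ℤ) (S : Finset C.V) :
    C.sf e Sᶜ = - C.sf e S := by
  have hd1 : (C.degSub e S : ℚ) + (C.degSub e Sᶜ : ℚ) = (C.totalDeg e : ℚ) := by
    exact_mod_cast C.degSub_add_compl e S
  have hd2 : (C.degω S : ℚ) + (C.degω Sᶜ : ℚ) = 2 * (C.genus : ℚ) - 2 := by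
    exact_mod_cast C.degω_add_compl S
  have h1 : (C.degSub e Sᶜ : ℚ) = (C.totalDeg e : ℚ) - (C.degSub e S : ℚ) := by linarith
  have h2 : (C.degω Sᶜ : ℚ) = (2 * (C.genus : ℚ) - 2) - (C.degω S : ℚ) := by linarith
  rw [sf, sf, h1, h2]
  rw [mul_sub, sub_div, mul_div_cancel_right₀ _ (C.genus_ne hg)]
  ring

lemma sf_union (e : C.V → ℤ) {S T : Finset C.V} (hd : Disjoint S T) :
    C.sf e (S ∪ T) = C.sf e S + C.sf e T := by
  have h1 : (C.degSub e (S ∪ T) : ℚ) = (C.degSub e S : ℚ) + (C.degSub e T : ℚ) := by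
    rw [C.degSub_union e hd]; push_cast; ring
  have h2 : (C.degω (S ∪ T) : ℚ) = (C.degω S : ℚ) + (C.degω T : ℚ) := by
    rw [C.degω_union hd]; push_cast; ring
  rw [sf, sf, sf, h1, h2]
  ring

lemma semistableAt_compl (hg : 2 ≤ C.genus) (e : C.V → ℤ) (S : Finset C.V)
    (h : C.semistableAt e Sᶜ) : C.semistableAt e S := by
  rw [semistableAt_iff] at h ⊢
  rw [C.sf_compl hg, abs_neg, C.k_compl] at h
  exact h

lemma no_cross {W T : Finset C.V} (hT : C.subComponent W T) {n : C.N} {a b : C.V}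
    (hab : C.ends n = s(a, b)) (ha : a ∈ T) (hb : b ∈ W) (hbT : b ∉ T) : False := by
  have hne : a ≠ b := fun hh => hbT (hh ▸ ha)
  exact hbT (hT.2.2.2 a ha b hb (C.adj_of_node hab hne))

lemma k_split {S B : Finset C.V} (hd : Disjoint S B)
    (hnc : ∀ n, ¬ (C.endsIn B n = 1 ∧ C.endsIn (S ∪ B)ᶜ n = 1)) :
    C.k S = C.k (S ∪ B) + C.k B := by
  classical
  unfold k
  have hdisj : Disjoint (univ.filter fun n => C.endsIn (S ∪ B) n = 1)
      (univ.filter fun n => C.endsIn B n = 1) := by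
    rw [Finset.disjoint_left]
    intro n h1 h2
    simp only [mem_filter, mem_univ, true_and] at h1 h2
    have hu := C.endsIn_union hd n
    have hc := C.endsIn_add_compl (S ∪ B) n
    exact hnc n ⟨h2, by omega⟩
  rw [← Finset.card_union_of_disjoint hdisj]
  congr 1
  ext n
  simp only [mem_filter, mem_univ, true_and, Finset.mem_union]
  have hu := C.endsIn_union hd n
  have hc := C.endsIn_add_compl (S ∪ B) n
  have hn := hnc n
  constructor
  · intro h1
    omega
  · intro h1
    rcases h1 with h1 | h1 <;> omega

theorem main_aux (hconn : C.Conn) (hg : 2 ≤ C.genus) (X : C.V) (e : C.V → ℤ)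
    (h : ∀ S : Finset C.V, S.Nonempty → S ≠ univ → C.connectedSub S → X ∈ S →
      C.semistableAt e S) :
    ∀ (m : ℕ) (S : Finset C.V), Sᶜ.card ≤ m → S.Nonempty → S ≠ univ → C.connectedSub S →
      X ∉ S → C.semistableAt e S := by
  intro m
  induction m with
  | zero =>
      intro S hcard hne huniv _ _
      exfalso
      have : Sᶜ = ∅ := Finset.card_eq_zero.mp (Nat.le_zero.mp hcard)
      apply huniv
      rw [← compl_compl S, this, Finset.compl_empty]
  | succ m ih =>
      intro S hcard hne huniv hconnS hX
      have hXc : X ∈ Sᶜ := Finset.mem_compl.mpr hX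
      have hScne : Sᶜ ≠ univ := by
        intro hE
        obtain ⟨s, hs⟩ := hne
        exact (Finset.mem_compl.mp (hE ▸ Finset.mem_univ s : s ∈ Sᶜ)) hs
      obtain ⟨Z, hZ, hXZ⟩ := C.exists_subComponent hXc
      by_cases hZall : Z = Sᶜ
      · -- the complement is connected and contains X
        refine C.semistableAt_compl hg e S (h Sᶜ ⟨X, hXc⟩ hScne ?_ hXc)
        exact hZall ▸ hZ.2.2.1
      · -- pick a component B of Sᶜ not containing X
        obtain ⟨bb, hbbW, hbbZ⟩ := Finset.exists_of_ssubset (lt_of_le_of_ne hZ.1 hZall)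
        obtain ⟨B, hB, hbB⟩ := C.exists_subComponent hbbW
        have hBW : B ⊆ Sᶜ := hB.1
        have hXB : X ∉ B := by
          intro hXB
          exact hbbZ (C.linked_mem_closed hZ hXZ
            (C.linked_mono hBW (C.linked_of_connectedSub hB.2.2.1 hXB hbB)))
        have hSB : Disjoint S B := Finset.disjoint_left.mpr
          (fun {v} hvS hvB => Finset.mem_compl.mp (hBW hvB) hvS)
        -- a boundary edge of B goes into S
        have hBnuniv : B ≠ univ := by
          intro hE
          obtain ⟨s, hs⟩ := hne
          exact Finset.mem_compl.mp (hBW (hE ▸ Finset.mem_univ s : s ∈ B)) hs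
        obtain ⟨a, haB, w, hwB, hadj⟩ := C.exists_boundary hconn hB.2.1 hBnuniv
        have hwS : w ∈ S := by
          by_contra hwS
          exact hwB (hB.2.2.2 a haB w (Finset.mem_compl.mpr hwS) hadj)
        have hSBc : S ⊆ Bᶜ := fun v hv =>
          Finset.mem_compl.mpr (Finset.disjoint_left.mp hSB hv)
        -- S ∪ B is connected
        have hUconn : C.connectedSub (S ∪ B) := by
          refine C.connectedSub_of_pivot (x := w) (Finset.mem_union_left _ hwS) ?_
          intro v hv
          rcases Finset.mem_union.mp hv with hv | hv
          · exact C.linked_mono Finset.subset_union_left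
              (C.linked_of_connectedSub hconnS hwS hv)
          · refine Relation.ReflTransGen.head
              ⟨Finset.mem_union_left _ hwS, Finset.mem_union_right _ haB, hadj.symm⟩ ?_
            exact C.linked_mono Finset.subset_union_right
              (C.linked_of_connectedSub hB.2.2.1 haB hv)
        have hXU : X ∉ S ∪ B := fun hXU => by
          rcases Finset.mem_union.mp hXU with hh | hh
          exacts [hX hh, hXB hh]
        have hUuniv : S ∪ B ≠ univ := fun hE => hXU (hE ▸ Finset.mem_univ X)
        have hcard' : (S ∪ B)ᶜ.card ≤ m := by
          have hss : (S ∪ B)ᶜ ⊂ Sᶜ := by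
            refine (Finset.ssubset_iff_of_subset (Finset.compl_subset_compl.mpr
              Finset.subset_union_left)).mpr ?_
            exact ⟨bb, hbbW, fun hcon =>
              (Finset.mem_compl.mp hcon) (Finset.mem_union_right _ hbB)⟩
          have := Finset.card_lt_card hss
          omega
        have hU : C.semistableAt e (S ∪ B) :=
          ih (S ∪ B) hcard' ⟨w, Finset.mem_union_left _ hwS⟩ hUuniv hUconn hXU
        -- Bᶜ is connected, contains X
        obtain ⟨s0, hs0⟩ := hne
        have hBcconn : C.connectedSub Bᶜ := by
          refine C.connectedSub_of_pivot (x := s0) (hSBc hs0) ?_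
          intro v hv
          by_cases hvS : v ∈ S
          · exact C.linked_mono hSBc (C.linked_of_connectedSub hconnS hs0 hvS)
          · have hvW : v ∈ Sᶜ := Finset.mem_compl.mpr hvS
            obtain ⟨T, hT, hvT⟩ := C.exists_subComponent hvW
            have hTB : ∀ t ∈ T, t ∉ B := by
              intro t ht htB
              exact Finset.mem_compl.mp hv (C.linked_mem_closed hB htB
                (C.linked_mono hT.1 (C.linked_of_connectedSub hT.2.2.1 ht hvT)))
            have hTBc : T ⊆ Bᶜ := fun t ht => Finset.mem_compl.mpr (hTB t ht)
            have hTnuniv : T ≠ univ := by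
              intro hE
              exact Finset.mem_compl.mp (hT.1 (hE ▸ Finset.mem_univ s0 : s0 ∈ T)) hs0
            obtain ⟨aT, haT, w2, hw2, hadj2⟩ := C.exists_boundary hconn hT.2.1 hTnuniv
            have hw2S : w2 ∈ S := by
              by_contra hw2S
              exact hw2 (hT.2.2.2 aT haT w2 (Finset.mem_compl.mpr hw2S) hadj2)
            refine ((C.linked_mono hSBc (C.linked_of_connectedSub hconnS hs0 hw2S)).tail
              ⟨hSBc hw2S, hTBc haT, hadj2.symm⟩).trans ?_
            exact C.linked_mono hTBc (C.linked_of_connectedSub hT.2.2.1 haT hvT)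
        have hXBc : X ∈ Bᶜ := Finset.mem_compl.mpr hXB
        have hBcnuniv : Bᶜ ≠ univ := by
          intro hE
          exact Finset.mem_compl.mp (hE ▸ Finset.mem_univ a : a ∈ Bᶜ) haB
        have hBss : C.semistableAt e B :=
          C.semistableAt_compl hg e B (h Bᶜ ⟨X, hXBc⟩ hBcnuniv hBcconn hXBc)
        -- no node joins B to the rest of the complement of S ∪ B
        have hnc : ∀ n, ¬ (C.endsIn B n = 1 ∧ C.endsIn (S ∪ B)ᶜ n = 1) := by
          rintro n ⟨h1, h2⟩
          obtain ⟨x, y, hxy⟩ := C.ends_rep n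
          rw [C.endsIn_eq hxy] at h1 h2
          by_cases hxB : x ∈ B
          · have hyB : y ∉ B := by by_contra hyB; simp [hxB, hyB] at h1
            have hxC : ¬ (x ∉ S ∧ x ∉ B) := fun hc => hc.2 hxB
            have hyC : y ∉ S ∧ y ∉ B := by by_contra hyC; simp [hxC, hyC] at h2
            exact C.no_cross hB hxy hxB (Finset.mem_compl.mpr hyC.1) hyB
          · have hyB : y ∈ B := by by_contra hyB; simp [hxB, hyB] at h1
            have hyC : ¬ (y ∉ S ∧ y ∉ B) := fun hc => hc.2 hyB
            have hxC : x ∉ S ∧ x ∉ B := by by_contra hxC; simp [hxC, hyC] at h2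
            have hxy' : C.ends n = s(y, x) := by rw [hxy, Sym2.eq_swap]
            exact C.no_cross hB hxy' hyB (Finset.mem_compl.mpr hxC.1) hxB
        have hk := C.k_split hSB hnc
        -- conclude
        rw [semistableAt_iff] at hU hBss ⊢
        have hsf : C.sf e S = C.sf e (S ∪ B) - C.sf e B := by
          rw [C.sf_union e hSB]; ring
        have habs : |C.sf e S| ≤ |C.sf e (S ∪ B)| + |C.sf e B| := by
          rw [hsf]; exact abs_sub _ _
        have hkQ : (C.k S : ℚ) = (C.k (S ∪ B) : ℚ) + (C.k B : ℚ) := by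
          exact_mod_cast hk
        rw [hkQ]
        calc |C.sf e S| ≤ |C.sf e (S ∪ B)| + |C.sf e B| := habs
          _ ≤ (C.k (S ∪ B) : ℚ) / 2 + (C.k B : ℚ) / 2 := add_le_add hU hBss
          _ = ((C.k (S ∪ B) : ℚ) + (C.k B : ℚ)) / 2 := by ring

end NodalCurve


open Finset in
/-- if a multidegree is semistable at every nonempty connected proper
subcurve containing the component `X`, then it is semistable at every nonempty connected
proper subcurve. -/
theorem semistable_of_semistable_through_X (C : NodalCurve) (hconn : C.Conn)
    (hg : 2 ≤ C.genus) (X : C.V) (e : C.V → ℤ)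
    (h : ∀ S : Finset C.V, S.Nonempty → S ≠ univ → C.connectedSub S → X ∈ S →
      C.semistableAt e S) :
    ∀ S : Finset C.V, S.Nonempty → S ≠ univ → C.connectedSub S →
      C.semistableAt e S := by
  intro S hne huniv hconnS
  by_cases hX : X ∈ S
  · exact h S hne huniv hconnS hX
  · exact C.main_aux hconn hg X e h Sᶜ.card S le_rfl hne huniv hconnS hX
end

section
/- Let C be a binary curve of genus g ≥ 2 (two smooth rational components X_1, X_2 meeting at g+1 nodes q_1,…,q_{g+1}), and let L be a line bundle with L|_{X_1} ≅ O_{X_1}(q_1+⋯+q_{g+1}) and L|_{X_2} ≅ O_{X_2}. Then h^0(C, L) = 2. -/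
open Polynomial

/-- Model of `H^0(C, L)` for a binary curve `C` of genus `g` (two copies of `P^1`
glued at the `g+1` nodes `q_i`), with `L|_{X_1} ≅ O_{X_1}(q_1 + ⋯ + q_{g+1})` and
`L|_{X_2} ≅ O_{X_2}`. Choosing a coordinate on `X_1` placing the nodes at the scalars
`a i` and trivializing, sections of `L|_{X_1}` are polynomials of degree `≤ g+1`,
sections of `L|_{X_2}` are constants, and a global section is a pair `(p, c)` matching
at the nodes via the (nonzero) gluing constants `t i`: `p(a i) = t i * c`. -/
noncomputable def binarySections (k : Type) [Field k] (g : ℕ)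
    (a : Fin (g + 1) → k) (t : Fin (g + 1) → k) : Submodule k (k[X] × k) where
  carrier := {x | x.1 ∈ Polynomial.degreeLE k ((g + 1 : ℕ) : WithBot ℕ) ∧
    ∀ i : Fin (g + 1), x.1.eval (a i) = t i * x.2}
  add_mem' := by
    rintro x y ⟨hx1, hx2⟩ ⟨hy1, hy2⟩
    refine ⟨Submodule.add_mem _ hx1 hy1, fun i => ?_⟩
    show (x.1 + y.1).eval (a i) = t i * (x.2 + y.2)
    simp [hx2 i, hy2 i, mul_add]
  zero_mem' := by
    refine ⟨Submodule.zero_mem _, fun i => ?_⟩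
    show (0 : k[X]).eval (a i) = t i * (0 : k)
    simp
  smul_mem' := by
    rintro c x ⟨hx1, hx2⟩
    refine ⟨Submodule.smul_mem _ c hx1, fun i => ?_⟩
    show (c • x.1).eval (a i) = t i * (c • x.2)
    simp [hx2 i]
    ring

/-- for a binary curve `C` of genus `g ≥ 2` and `L` with
`L|_{X_1} ≅ O_{X_1}(q_1 + ⋯ + q_{g+1})`, `L|_{X_2} ≅ O_{X_2}`, one has `h^0(C, L) = 2`.
The nodes are distinct (`a` injective) and the gluing constants `t i` are nonzero. -/
theorem binary_curve_h0 (k : Type) [Field k] (g : ℕ) (hg : 2 ≤ g)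
    (a : Fin (g + 1) → k) (ha : Function.Injective a)
    (t : Fin (g + 1) → k) (ht : ∀ i, t i ≠ 0) :
    Module.finrank k (binarySections k g a t) = 2 := by
  classical
  set N : k[X] := ∏ i : Fin (g + 1), (X - C (a i)) with hNdef
  have hNm : N.Monic := monic_prod_of_monic _ _ fun i _ => monic_X_sub_C _
  have hNdeg : N.natDegree = g + 1 := by
    rw [hNdef, natDegree_prod _ _ fun i _ => X_sub_C_ne_zero _]
    simp
  have hNdegree : N.degree = ((g + 1 : ℕ) : WithBot ℕ) := by
    rw [degree_eq_natDegree hNm.ne_zero, hNdeg]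
  have hNeval : ∀ i, N.eval (a i) = 0 := fun i => by
    rw [hNdef, eval_prod]
    exact Finset.prod_eq_zero (Finset.mem_univ i) (by simp)
  set P : k[X] := Lagrange.interpolate Finset.univ a t with hPdef
  have hPdeg : P.degree < ((g + 1 : ℕ) : WithBot ℕ) := by
    have h := Lagrange.degree_interpolate_lt (s := Finset.univ) t ha.injOn
    rwa [Finset.card_univ, Fintype.card_fin] at h
  have hPeval : ∀ i, P.eval (a i) = t i := fun i =>
    Lagrange.eval_interpolate_at_node (s := Finset.univ) t ha.injOn (Finset.mem_univ i)
  -- the linear map (α, β) ↦ (α·N + β·P, β)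
  let ψ : (k × k) →ₗ[k] k[X] × k :=
  { toFun := fun x => (C x.1 * N + C x.2 * P, x.2)
    map_add' := fun x y => by
      refine Prod.ext ?_ rfl
      show C (x.1 + y.1) * N + C (x.2 + y.2) * P =
        (C x.1 * N + C x.2 * P) + (C y.1 * N + C y.2 * P)
      rw [C_add, C_add]; ring
    map_smul' := fun c x => by
      refine Prod.ext ?_ rfl
      show C (c * x.1) * N + C (c * x.2) * P = c • (C x.1 * N + C x.2 * P)
      rw [smul_eq_C_mul, C_mul, C_mul]; ring }
  have hψ1 : ∀ x : k × k, (ψ x).1 = C x.1 * N + C x.2 * P := fun _ => rfl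
  have hψ2 : ∀ x : k × k, (ψ x).2 = x.2 := fun _ => rfl
  have hmem : ∀ x : k × k, ψ x ∈ binarySections k g a t := by
    intro x
    refine ⟨?_, fun i => ?_⟩
    · rw [hψ1]
      refine Submodule.add_mem _ ?_ ?_
      · rw [← smul_eq_C_mul]
        exact Submodule.smul_mem _ _ (mem_degreeLE.2 hNdegree.le)
      · rw [← smul_eq_C_mul]
        exact Submodule.smul_mem _ _ (mem_degreeLE.2 hPdeg.le)
    · rw [hψ1, hψ2]
      simp [hNeval i, hPeval i, mul_comm]
  let φ : (k × k) →ₗ[k] binarySections k g a t := ψ.codRestrict _ hmem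
  have hinj : Function.Injective φ := by
    intro x y hxy
    have h : ψ x = ψ y := congrArg Subtype.val hxy
    have h2 : x.2 = y.2 := by rw [← hψ2 x, ← hψ2 y, h]
    have h1 : C x.1 * N + C x.2 * P = C y.1 * N + C y.2 * P := by
      rw [← hψ1 x, ← hψ1 y, h]
    rw [h2] at h1
    have h3 : C x.1 * N = C y.1 * N := by
      have := add_right_cancel h1
      exact this
    have h4 : C x.1 = C y.1 := mul_right_cancel₀ hNm.ne_zero h3
    exact Prod.ext (C_injective h4) h2
  have hsurj : Function.Surjective φ := by
    rintro ⟨⟨p, c⟩, hp, hpc⟩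
    set q : k[X] := p - C c * P with hqdef
    have hqdeg : q.degree ≤ ((g + 1 : ℕ) : WithBot ℕ) := by
      refine (degree_sub_le _ _).trans (max_le (mem_degreeLE.1 hp) ?_)
      rw [← smul_eq_C_mul]
      exact (degree_smul_le _ _).trans hPdeg.le
    have hqeval : ∀ i, q.eval (a i) = 0 := fun i => by
      have := hpc i
      simp only [hqdef, eval_sub, eval_mul, eval_C, hPeval i, this]
      ring
    set α : k := q.coeff (g + 1) with hαdef
    have hkey : q - C α * N = 0 := by
      refine Polynomial.eq_zero_of_degree_lt_of_eval_index_eq_zero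
        (v := a) Finset.univ ha.injOn ?_ ?_
      · rw [Finset.card_univ, Fintype.card_fin]
        rw [degree_lt_iff_coeff_zero]
        intro m hm
        rcases eq_or_lt_of_le hm with hm' | hm'
        · have hm'' : m = g + 1 := by exact_mod_cast hm'.symm
          subst hm''
          simp only [coeff_sub, coeff_C_mul, hαdef]
          rw [show N.coeff (g + 1) = 1 from hNdeg ▸ hNm.coeff_natDegree]
          ring
        · have hq0 : q.coeff m = 0 :=
            coeff_eq_zero_of_degree_lt (lt_of_le_of_lt hqdeg (by exact_mod_cast hm'))
          have hN0 : N.coeff m = 0 :=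
            coeff_eq_zero_of_degree_lt (hNdegree ▸ (by exact_mod_cast hm' : ((g + 1 : ℕ) : WithBot ℕ) < (m : ℕ)))
          simp [hq0, hN0]
      · intro i _
        simp [hqeval i, hNeval i]
    have hq : q = C α * N := by rwa [sub_eq_zero] at hkey
    refine ⟨(α, c), ?_⟩
    apply Subtype.ext
    refine Prod.ext ?_ rfl
    show C α * N + C c * P = p
    rw [← hq, hqdef]; ring
  have e : (k × k) ≃ₗ[k] binarySections k g a t :=
    LinearEquiv.ofBijective φ ⟨hinj, hsurj⟩
  rw [← e.finrank_eq, Module.finrank_prod, Module.finrank_self]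
end

section
/- Let T be a finite tree with weight function w: V(T) → ℕ and total weight g ≥ 2, such that every vertex v with w(v) = 0 has degree ≥ 3 in T. If no vertex of T is central (every vertex x has some component of T − x with weight ≥ g/2), then T has exactly two semicentral vertices, and they are adjacent. -/
open Finset
set_option linter.unusedSectionVars false

/-- `S` is (the vertex set of) a connected component of `T − x` (deletion of the
vertex `x`): nonempty, avoiding `x`, connected, and closed under adjacency away
from `x`. -/
def IsComplComponent {V : Type} [Fintype V] [DecidableEq V] (G : SimpleGraph V)
    (x : V) (S : Finset V) : Prop :=
  x ∉ S ∧ S.Nonempty ∧ (G.induce (S : Set V)).Connected ∧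
    ∀ u ∈ S, ∀ v : V, G.Adj u v → v ≠ x → v ∈ S

/-- A vertex `x` is central if every connected component of `T − x` has total
weight `< g/2`, where `g` is the total weight. -/
def IsCentralVertex {V : Type} [Fintype V] [DecidableEq V] (G : SimpleGraph V)
    (w : V → ℕ) (x : V) : Prop :=
  ∀ S : Finset V, IsComplComponent G x S → 2 * ∑ v ∈ S, w v < ∑ v, w v

/-- A vertex `x` is semicentral if every connected component of `T − x` has total
weight `≤ g/2`. -/
def IsSemicentralVertex {V : Type} [Fintype V] [DecidableEq V] (G : SimpleGraph V)
    (w : V → ℕ) (x : V) : Prop :=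
  ∀ S : Finset V, IsComplComponent G x S → 2 * ∑ v ∈ S, w v ≤ ∑ v, w v

namespace TTS

open SimpleGraph

variable {V : Type} [Fintype V] [DecidableEq V]

/-- The graph `G` with the vertex `x` isolated. -/
def del (G : SimpleGraph V) (x : V) : SimpleGraph V where
  Adj u v := G.Adj u v ∧ u ≠ x ∧ v ≠ x
  symm := ⟨fun _ _ ⟨h, hu, hv⟩ => ⟨h.symm, hv, hu⟩⟩
  loopless := ⟨fun v ⟨h, _, _⟩ => G.loopless.irrefl v h⟩

lemma del_le (G : SimpleGraph V) (x : V) : del G x ≤ G := fun _ _ h => h.1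

lemma del_adj {G : SimpleGraph V} {x u v : V} (h : G.Adj u v) (hu : u ≠ x)
    (hv : v ≠ x) : (del G x).Adj u v := ⟨h, hu, hv⟩

/-- The component of `T − x` containing `u`. -/
noncomputable def comp (G : SimpleGraph V) (x u : V) : Finset V := by
  classical exact univ.filter (fun v => (del G x).Reachable u v)

lemma mem_comp {G : SimpleGraph V} {x u v : V} :
    v ∈ comp G x u ↔ (del G x).Reachable u v := by
  unfold comp; simp

lemma mem_comp_self {G : SimpleGraph V} {x u : V} : u ∈ comp G x u :=
  mem_comp.mpr (Reachable.refl u)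

lemma comp_eq_of_mem {G : SimpleGraph V} {x u v : V} (h : v ∈ comp G x u) :
    comp G x u = comp G x v := by
  ext t
  rw [mem_comp, mem_comp]
  exact ⟨fun ht => (mem_comp.mp h).symm.trans ht, fun ht => (mem_comp.mp h).trans ht⟩

lemma del_walk_end_ne {G : SimpleGraph V} {x a b : V} (p : (del G x).Walk a b)
    (ha : a ≠ x) : b ≠ x := by
  induction p with
  | nil => exact ha
  | cons h _ ih => exact ih h.2.2

lemma not_mem_comp {G : SimpleGraph V} {x u : V} (hu : u ≠ x) : x ∉ comp G x u := by
  intro h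
  obtain ⟨p⟩ := mem_comp.mp h
  exact del_walk_end_ne p hu rfl

/-- A walk in a subgraph of `G` avoiding a vertex `z` gives reachability in `del G z`. -/
lemma walk_to_del {G H : SimpleGraph V} (hle : H ≤ G) {z : V} :
    ∀ {a b : V} (p : H.Walk a b), (∀ v ∈ p.support, v ≠ z) → (del G z).Reachable a b
  | _, _, SimpleGraph.Walk.nil, _ => Reachable.refl _
  | a, b, @SimpleGraph.Walk.cons _ _ _ c _ hadj p, h => by
    have h1 : a ∈ (SimpleGraph.Walk.cons hadj p).support :=
      SimpleGraph.Walk.start_mem_support _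
    have h2 : c ∈ (SimpleGraph.Walk.cons hadj p).support := by
      rw [SimpleGraph.Walk.support_cons]
      exact List.mem_cons_of_mem _ p.start_mem_support
    refine (SimpleGraph.Adj.reachable (del_adj (hle hadj) (h a h1) (h c h2))).trans
      (walk_to_del hle p (fun v hv => h v ?_))
    rw [SimpleGraph.Walk.support_cons]
    exact List.mem_cons_of_mem _ hv

lemma walk_support_mem_comp {G : SimpleGraph V} {x u a b : V}
    (p : (del G x).Walk a b) (ha : a ∈ comp G x u) : ∀ v ∈ p.support, v ∈ comp G x u :=
  fun v hv => mem_comp.mpr ((mem_comp.mp ha).trans ⟨p.takeUntil v hv⟩)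

lemma induce_reach {G : SimpleGraph V} {x : V} {S : Finset V} :
    ∀ {a b : V} (p : (del G x).Walk a b), (∀ v ∈ p.support, v ∈ S) →
    ∀ (ha : a ∈ (S : Set V)) (hb : b ∈ (S : Set V)),
      (G.induce (S : Set V)).Reachable ⟨a, ha⟩ ⟨b, hb⟩
  | _, _, SimpleGraph.Walk.nil, _, _, _ => Reachable.refl _
  | a, b, @SimpleGraph.Walk.cons _ _ _ c _ hadj p, hsub, ha, hb => by
    have hc : c ∈ (S : Set V) := by
      refine Finset.mem_coe.mpr (hsub c ?_)
      rw [SimpleGraph.Walk.support_cons]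
      exact List.mem_cons_of_mem _ p.start_mem_support
    have h1 : (G.induce (S : Set V)).Adj ⟨a, ha⟩ ⟨c, hc⟩ := hadj.1
    refine h1.reachable.trans (induce_reach p (fun v hv => hsub v ?_) hc hb)
    rw [SimpleGraph.Walk.support_cons]
    exact List.mem_cons_of_mem _ hv

lemma induce_walk_to_del {G : SimpleGraph V} {x : V} {S : Finset V} (hx : x ∉ S) :
    ∀ {a b : ↥(S : Set V)} (_ : (G.induce (S : Set V)).Walk a b), (del G x).Reachable ↑a ↑b
  | _, _, SimpleGraph.Walk.nil => Reachable.refl _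
  | a, _, SimpleGraph.Walk.cons (v := c) hadj p => by
    have hane : (a : V) ≠ x := fun h => hx (h ▸ Finset.mem_coe.mp a.2)
    have hcne : (c : V) ≠ x := fun h => hx (h ▸ Finset.mem_coe.mp c.2)
    exact (SimpleGraph.Adj.reachable
      (del_adj (show G.Adj ↑a ↑c from hadj) hane hcne)).trans (induce_walk_to_del hx p)

lemma del_walk_mem_closed {G : SimpleGraph V} {x : V} {S : Finset V}
    (hcl : ∀ u ∈ S, ∀ v : V, G.Adj u v → v ≠ x → v ∈ S) :
    ∀ {a b : V} (_ : (del G x).Walk a b), a ∈ S → b ∈ S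
  | _, _, SimpleGraph.Walk.nil, ha => ha
  | _, _, SimpleGraph.Walk.cons hadj p, ha =>
    del_walk_mem_closed hcl p (hcl _ ha _ hadj.1 hadj.2.2)

lemma isComplComponent_comp {G : SimpleGraph V} {x u : V} (hu : u ≠ x) :
    IsComplComponent G x (comp G x u) := by
  refine ⟨not_mem_comp hu, ⟨u, mem_comp_self⟩, ?_, ?_⟩
  · rw [SimpleGraph.connected_iff]
    refine ⟨?_, ⟨⟨u, Finset.mem_coe.mpr mem_comp_self⟩⟩⟩
    rintro ⟨a, ha⟩ ⟨b, hb⟩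
    obtain ⟨p⟩ := (mem_comp.mp (Finset.mem_coe.mp ha)).symm.trans
      (mem_comp.mp (Finset.mem_coe.mp hb))
    exact induce_reach p (walk_support_mem_comp p (Finset.mem_coe.mp ha)) ha hb
  · intro a ha v hav hvx
    have hax : a ≠ x := fun h => (not_mem_comp hu) (h ▸ ha)
    exact mem_comp.mpr ((mem_comp.mp ha).trans
      (SimpleGraph.Adj.reachable (del_adj hav hax hvx)))

lemma eq_comp_of_mem {G : SimpleGraph V} {x : V} {S : Finset V}
    (hS : IsComplComponent G x S) {u : V} (hu : u ∈ S) : S = comp G x u := by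
  obtain ⟨hx, _, hconn, hcl⟩ := hS
  apply Finset.Subset.antisymm
  · intro v hv
    obtain ⟨p⟩ := hconn.preconnected ⟨u, Finset.mem_coe.mpr hu⟩ ⟨v, Finset.mem_coe.mpr hv⟩
    exact mem_comp.mpr (induce_walk_to_del hx p)
  · intro v hv
    obtain ⟨p⟩ := mem_comp.mp hv
    exact del_walk_mem_closed hcl p hu

lemma exists_first_step {G : SimpleGraph V} {x u : V} (hu : u ≠ x)
    (q : G.Walk x u) (hq : q.IsPath) : ∃ y, G.Adj x y ∧ (del G x).Reachable y u := by
  cases q with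
  | nil => exact absurd rfl hu
  | cons hadj q' =>
    rw [SimpleGraph.Walk.cons_isPath_iff] at hq
    exact ⟨_, hadj, walk_to_del le_rfl q' (fun v hv h => hq.2 (h ▸ hv))⟩

lemma exists_adj_comp {G : SimpleGraph V} (hc : G.Connected) {x u : V} (hu : u ≠ x) :
    ∃ y, G.Adj x y ∧ comp G x u = comp G x y := by
  obtain ⟨p0⟩ := hc.preconnected u x
  obtain ⟨y, hadj, hreach⟩ := exists_first_step hu p0.reverse.bypass p0.reverse.bypass_isPath
  exact ⟨y, hadj, comp_eq_of_mem (mem_comp.mpr hreach.symm)⟩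

lemma mem_comp_or {G : SimpleGraph V} (hT : G.IsTree) {x y : V} (hxy : G.Adj x y)
    (v : V) : v ∈ comp G x y ∨ v ∈ comp G y x := by
  by_cases hvx : v = x
  · right; subst hvx; exact mem_comp_self
  by_cases hvy : v = y
  · left; subst hvy; exact mem_comp_self
  obtain ⟨p0⟩ := hT.isConnected.preconnected v x
  set p := p0.bypass with hp
  have hpath : p.IsPath := p0.bypass_isPath
  by_cases hy : y ∈ p.support
  · left
    have hq : x ∉ (p.takeUntil y hy).support := by
      intro hxmem
      have hnd := hpath.support_nodup
      rw [← SimpleGraph.Walk.take_spec p hy, SimpleGraph.Walk.support_append] at hnd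
      have hx2 : x ∈ (p.dropUntil y hy).support.tail := by
        have hxd : x ∈ (p.dropUntil y hy).support := SimpleGraph.Walk.end_mem_support _
        rw [SimpleGraph.Walk.support_eq_cons] at hxd
        rcases List.mem_cons.mp hxd with h | h
        · exact absurd h hxy.ne
        · exact h
      exact (List.disjoint_of_nodup_append hnd) hxmem hx2
    have h := walk_to_del (z := x) le_rfl (p.takeUntil y hy) (fun t ht h => hq (by subst h; exact ht))
    exact mem_comp.mpr h.symm
  · right
    have h := walk_to_del (z := y) le_rfl p (fun t ht h => hy (by subst h; exact ht))
    exact mem_comp.mpr h.symm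

lemma del_le_sdiff {G : SimpleGraph V} {x y : V} :
    del G x ≤ G \ SimpleGraph.fromEdgeSet {s(x, y)} := by
  intro u v h
  rw [SimpleGraph.sdiff_adj]
  refine ⟨h.1, ?_⟩
  rw [SimpleGraph.fromEdgeSet_adj]
  rintro ⟨he, -⟩
  rw [Set.mem_singleton_iff, Sym2.eq_iff] at he
  rcases he with ⟨h1, _⟩ | ⟨_, h2⟩
  · exact h.2.1 h1
  · exact h.2.2 h2

lemma not_mem_comp_of_mem {G : SimpleGraph V} (hT : G.IsTree) {x y : V}
    (hxy : G.Adj x y) {v : V} (h1 : v ∈ comp G x y) : v ∉ comp G y x := by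
  intro h2
  have hb := SimpleGraph.isAcyclic_iff_forall_adj_isBridge.mp hT.IsAcyclic hxy
  rw [SimpleGraph.isBridge_iff] at hb
  apply hb
  have r1 : (G \ SimpleGraph.fromEdgeSet {s(x, y)}).Reachable y v :=
    (mem_comp.mp h1).mono del_le_sdiff
  have r2 : (G \ SimpleGraph.fromEdgeSet {s(y, x)}).Reachable x v :=
    (mem_comp.mp h2).mono del_le_sdiff
  rw [Sym2.eq_swap] at r2
  exact r2.trans r1.symm

lemma no_two_attach {G : SimpleGraph V} (hT : G.IsTree) {x y t : V}
    (hxy : G.Adj x y) (hxt : G.Adj x t) (hty : t ≠ y) : t ∉ comp G x y := by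
  intro h
  have hb := SimpleGraph.isAcyclic_iff_forall_adj_isBridge.mp hT.IsAcyclic hxy
  rw [SimpleGraph.isBridge_iff] at hb
  apply hb
  have r1 : (G \ SimpleGraph.fromEdgeSet {s(x, y)}).Reachable y t :=
    (mem_comp.mp h).mono del_le_sdiff
  have r2 : (G \ SimpleGraph.fromEdgeSet {s(x, y)}).Adj t x := by
    rw [SimpleGraph.sdiff_adj]
    refine ⟨hxt.symm, ?_⟩
    rw [SimpleGraph.fromEdgeSet_adj]
    rintro ⟨he, -⟩
    rw [Set.mem_singleton_iff, Sym2.eq_iff] at he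
    rcases he with ⟨h1, _⟩ | ⟨h1, _⟩
    · exact hxt.ne' h1
    · exact hty h1
  exact (r1.trans r2.reachable).symm

lemma comp_union {G : SimpleGraph V} (hT : G.IsTree) {x y : V} (hxy : G.Adj x y) :
    comp G x y ∪ comp G y x = univ := by
  ext v
  simp only [Finset.mem_union, Finset.mem_univ, iff_true]
  exact mem_comp_or hT hxy v

lemma sum_comp {G : SimpleGraph V} (hT : G.IsTree) {x y : V} (hxy : G.Adj x y)
    (w : V → ℕ) : ∑ v ∈ comp G x y, w v + ∑ v ∈ comp G y x, w v = ∑ v, w v := by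
  rw [← Finset.sum_union (Finset.disjoint_left.mpr
    (fun v h1 h2 => not_mem_comp_of_mem hT hxy h1 h2)), comp_union hT hxy]

lemma one_le_weight_comp {G : SimpleGraph V} [DecidableRel G.Adj] (hT : G.IsTree)
    (w : V → ℕ) (hdeg : ∀ v : V, w v = 0 → 3 ≤ G.degree v) {x : V} {S : Finset V}
    (hS : IsComplComponent G x S) : 1 ≤ ∑ v ∈ S, w v := by
  by_contra h
  push_neg at h
  have hz : ∀ v ∈ S, w v = 0 := Finset.sum_eq_zero_iff.mp (Nat.lt_one_iff.mp h)
  obtain ⟨hx, hne, hconn, hcl⟩ := hS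
  set H := G.induce (S : Set V) with hH
  haveI : DecidableRel H.Adj := Classical.decRel _
  have hac : H.IsAcyclic := by
    intro v c hc
    exact hT.IsAcyclic _
      (hc.map (f := (SimpleGraph.Embedding.induce (S : Set V)).toHom) Subtype.val_injective)
  have htree : H.IsTree := ⟨hconn, hac⟩
  have hcard := htree.card_edgeFinset
  have hdeg2 : ∀ a : ↥(S : Set V), 2 ≤ H.degree a := by
    intro a
    have haS : ↑a ∈ S := Finset.mem_coe.mp a.2
    have h3 : 3 ≤ G.degree ↑a := hdeg _ (hz _ haS)
    have hsub : (G.neighborFinset ↑a).erase x ⊆ (H.neighborFinset a).image Subtype.val := by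
      intro u hu
      rw [Finset.mem_erase, SimpleGraph.mem_neighborFinset] at hu
      have huS : u ∈ S := hcl ↑a haS u hu.2 hu.1
      refine Finset.mem_image.mpr ⟨⟨u, Finset.mem_coe.mpr huS⟩, ?_, rfl⟩
      rw [SimpleGraph.mem_neighborFinset]
      exact hu.2
    have h4 : ((G.neighborFinset ↑a).erase x).card ≤ (H.neighborFinset a).card :=
      le_trans (Finset.card_le_card hsub) Finset.card_image_le
    have h5 := Finset.pred_card_le_card_erase (s := G.neighborFinset (↑a : V)) (a := x)
    rw [SimpleGraph.card_neighborFinset_eq_degree] at h5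
    rw [← SimpleGraph.card_neighborFinset_eq_degree]
    omega
  have hsum := SimpleGraph.sum_degrees_eq_twice_card_edges H
  have h2n : 2 * Fintype.card ↥(S : Set V) ≤ ∑ a, H.degree a := by
    calc 2 * Fintype.card ↥(S : Set V) = ∑ _a : ↥(S : Set V), 2 := by
          rw [Finset.sum_const, Finset.card_univ]; ring
    _ ≤ ∑ a, H.degree a := Finset.sum_le_sum (fun a _ => hdeg2 a)
  have hcards : Fintype.card ↥(S : Set V) = S.card := by
    rw [Fintype.card_congr (Equiv.subtypeEquivRight (fun v => Finset.mem_coe))]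
    exact Fintype.card_coe S
  have hne' : 1 ≤ S.card := Finset.card_pos.mpr hne
  rw [hsum, hcards] at h2n
  omega

end TTS

open TTS

/-- a finite weighted tree of total weight `g ≥ 2`, in which every
weight-0 vertex has degree `≥ 3`, and which has no central vertex, has exactly two
semicentral vertices, and they are adjacent. -/
theorem tree_two_semicentral {V : Type} [Fintype V] [DecidableEq V]
    (G : SimpleGraph V) [DecidableRel G.Adj] (hT : G.IsTree) (w : V → ℕ)
    (hg : 2 ≤ ∑ v, w v) (hdeg : ∀ v : V, w v = 0 → 3 ≤ G.degree v)
    (hnc : ∀ x : V, ¬ IsCentralVertex G w x) :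
    ∃ x y : V, x ≠ y ∧ G.Adj x y ∧
      IsSemicentralVertex G w x ∧ IsSemicentralVertex G w y ∧
      ∀ z : V, IsSemicentralVertex G w z → z = x ∨ z = y := by
  set g := ∑ v, w v with hgdef
  -- V is nonempty
  have hVne : Nonempty V := by
    by_contra h
    rw [not_nonempty_iff] at h
    rw [hgdef, Finset.univ_eq_empty, Finset.sum_empty] at hg
    omega
  -- every vertex has a heavy component
  have heavy : ∀ x : V, ∃ S : Finset V, IsComplComponent G x S ∧ g ≤ 2 * ∑ v ∈ S, w v := by
    intro x
    by_contra h
    push_neg at h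
    exact hnc x (fun S hS => h S hS)
  -- existence of a balanced edge
  have key : ∀ n : ℕ, ∀ x : V, ∀ S : Finset V, IsComplComponent G x S →
      g ≤ 2 * ∑ v ∈ S, w v → S.card ≤ n →
      ∃ a b : V, G.Adj a b ∧ 2 * ∑ v ∈ comp G a b, w v = g ∧
        2 * ∑ v ∈ comp G b a, w v = g := by
    intro n
    induction n with
    | zero =>
      intro x S hS _ hcard
      have := Finset.card_pos.mpr hS.2.1
      omega
    | succ n ih =>
      intro x S hS hheavy hcard
      obtain ⟨u, hu⟩ := hS.2.1
      have hux : u ≠ x := fun h => hS.1 (h ▸ hu)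
      obtain ⟨y, hxy, hcompeq⟩ := exists_adj_comp hT.isConnected hux
      have hSy : S = comp G x y := (eq_comp_of_mem hS hu).trans hcompeq
      have hyS : y ∈ S := hSy ▸ mem_comp_self
      obtain ⟨T, hT', hTheavy⟩ := heavy y
      by_cases hxT : x ∈ T
      · have hTx : T = comp G y x := eq_comp_of_mem hT' hxT
        have hsum := sum_comp hT hxy w
        rw [← hgdef] at hsum
        rw [hSy] at hheavy
        rw [hTx] at hTheavy
        exact ⟨x, y, hxy, by omega, by omega⟩
      · have hsub : T ⊆ S.erase y := by
          intro v hv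
          have hvy : v ≠ y := fun h => hT'.1 (h ▸ hv)
          have hvnotyx : v ∉ comp G y x := by
            intro hmem
            have hTv : T = comp G y v := eq_comp_of_mem hT' hv
            have h2 : comp G y x = comp G y v := comp_eq_of_mem hmem
            have : T = comp G y x := hTv.trans h2.symm
            exact hxT (this ▸ mem_comp_self)
          have hvB : v ∈ comp G x y := (mem_comp_or hT hxy v).resolve_right hvnotyx
          exact Finset.mem_erase.mpr ⟨hvy, hSy ▸ hvB⟩
        have hc1 : T.card ≤ n := by
          have h1 : T.card ≤ (S.erase y).card := Finset.card_le_card hsub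
          have h2 := Finset.card_erase_of_mem hyS
          have h3 : 1 ≤ S.card := Finset.card_pos.mpr ⟨y, hyS⟩
          omega
        exact ih y T hT' hTheavy hc1
  obtain ⟨x0⟩ := hVne
  obtain ⟨S0, hS0, hS0h⟩ := heavy x0
  obtain ⟨x, y, hxy, hA, hB⟩ :=
    key (Fintype.card V) x0 S0 hS0 hS0h (by
      rw [← Finset.card_univ]; exact Finset.card_le_card (Finset.subset_univ _))
  -- semicentrality
  have semic : ∀ a b : V, G.Adj a b → 2 * ∑ v ∈ comp G a b, w v = g →
      2 * ∑ v ∈ comp G b a, w v = g → IsSemicentralVertex G w a := by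
    intro a b hab h1 h2 S hS
    obtain ⟨u, hu⟩ := hS.2.1
    by_cases hub : u ∈ comp G a b
    · have hSu : S = comp G a u := eq_comp_of_mem hS hu
      have : S = comp G a b := hSu.trans (comp_eq_of_mem hub).symm
      rw [this]
      omega
    · have hsub : S ⊆ comp G b a := by
        intro v hv
        have hvu : v ∈ comp G a u := (eq_comp_of_mem hS hu) ▸ hv
        have hnv : v ∉ comp G a b := by
          intro hvb
          apply hub
          have e1 : comp G a u = comp G a v := comp_eq_of_mem hvu
          have e2 : comp G a b = comp G a v := comp_eq_of_mem hvb
          have : comp G a b = comp G a u := e2.trans e1.symm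
          rw [this]
          exact mem_comp_self
        exact (mem_comp_or hT hab v).resolve_left hnv
      have hle : ∑ v ∈ S, w v ≤ ∑ v ∈ comp G b a, w v :=
        Finset.sum_le_sum_of_subset hsub
      omega
  -- uniqueness core lemma
  have uniq : ∀ a b : V, G.Adj a b → 2 * ∑ v ∈ comp G a b, w v = g →
      2 * ∑ v ∈ comp G b a, w v = g →
      ∀ z : V, IsSemicentralVertex G w z → z ∈ comp G b a → z = a := by
    intro a b hab h1 h2 z hz hzA
    by_contra hza
    have hzB : z ∉ comp G a b := not_mem_comp_of_mem hT hab.symm hzA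
    have hzb : z ≠ b := fun h => hzB (h ▸ mem_comp_self)
    set C := comp G z b with hC
    have hCcomp : IsComplComponent G z C := isComplComponent_comp (Ne.symm hzb)
    have hsemiC := hz C hCcomp
    rw [← hgdef] at hsemiC
    have hBsubC : comp G a b ⊆ C := by
      intro v hv
      obtain ⟨p⟩ := mem_comp.mp hv
      have hsupp : ∀ t ∈ p.support, t ≠ z := by
        intro t ht h
        exact hzB (h ▸ walk_support_mem_comp p mem_comp_self t ht)
      exact mem_comp.mpr (walk_to_del (del_le G a) p hsupp)
    have haz : a ≠ z := fun h => hza h.symm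
    have haC : a ∈ C :=
      mem_comp.mpr (SimpleGraph.Adj.reachable (del_adj hab.symm (Ne.symm hzb) haz))
    have haB : a ∉ comp G a b := not_mem_comp hab.ne'
    have hwa : w a = 0 := by
      have hsub2 : insert a (comp G a b) ⊆ C := Finset.insert_subset haC hBsubC
      have hle := Finset.sum_le_sum_of_subset (f := w) hsub2
      rw [Finset.sum_insert haB] at hle
      omega
    have hdega := hdeg a hwa
    obtain ⟨q, haq, hcompz⟩ := exists_adj_comp hT.isConnected (show z ≠ a from fun h => hza h)
    obtain ⟨t, hat, htb, htq⟩ : ∃ t : V, G.Adj a t ∧ t ≠ b ∧ t ≠ q := by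
      by_contra h
      push_neg at h
      have hsubn : G.neighborFinset a ⊆ {b, q} := by
        intro t ht
        rw [SimpleGraph.mem_neighborFinset] at ht
        by_cases h1 : t = b
        · exact Finset.mem_insert.mpr (Or.inl h1)
        · exact Finset.mem_insert.mpr (Or.inr (Finset.mem_singleton.mpr (h t ht h1)))
      have hc1 := Finset.card_le_card hsubn
      have hc2 : ({b, q} : Finset V).card ≤ 2 :=
        le_trans (Finset.card_insert_le _ _) (by simp)
      rw [← SimpleGraph.card_neighborFinset_eq_degree] at hdega
      omega
    have htB : t ∉ comp G a b := no_two_attach hT hab hat htb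
    have htQ : t ∉ comp G a q := no_two_attach hT haq hat htq
    set D := comp G a t with hD
    have hDcomp : IsComplComponent G a D := isComplComponent_comp hat.ne'
    have hwD := one_le_weight_comp hT w hdeg hDcomp
    have hzD : z ∉ D := by
      intro h
      have e1 : comp G a t = comp G a z := comp_eq_of_mem h
      apply htQ
      rw [← hcompz, ← e1]
      exact mem_comp_self
    have htz : t ≠ z := fun h => hzD (h ▸ mem_comp_self)
    have hDsubC : D ⊆ C := by
      intro v hv
      obtain ⟨p⟩ := mem_comp.mp hv
      have hsup : ∀ s ∈ p.support, s ≠ z := by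
        intro s hs h
        exact hzD (h ▸ walk_support_mem_comp p mem_comp_self s hs)
      have r1 : (del G z).Reachable t v := walk_to_del (del_le G a) p hsup
      have r2 : (del G z).Reachable b t :=
        (SimpleGraph.Adj.reachable (del_adj hab.symm (Ne.symm hzb) haz)).trans
          (SimpleGraph.Adj.reachable (del_adj hat haz htz))
      exact mem_comp.mpr (r2.trans r1)
    have hBD : Disjoint (comp G a b) D := by
      rw [Finset.disjoint_left]
      intro v hv1 hv2
      apply htB
      rw [comp_eq_of_mem hv1, ← comp_eq_of_mem hv2]
      exact mem_comp_self
    have haD : a ∉ D := not_mem_comp hat.ne'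
    have hsub3 : insert a (comp G a b ∪ D) ⊆ C :=
      Finset.insert_subset haC (Finset.union_subset hBsubC hDsubC)
    have hle := Finset.sum_le_sum_of_subset (f := w) hsub3
    rw [Finset.sum_insert (by simp [haB, haD]), Finset.sum_union hBD] at hle
    omega
  refine ⟨x, y, hxy.ne, hxy, semic x y hxy hA hB, semic y x hxy.symm hB hA, ?_⟩
  intro z hz
  rcases mem_comp_or hT hxy z with hzB | hzA
  · exact Or.inr (uniq y x hxy.symm hB hA z hz hzB)
  · exact Or.inl (uniq x y hxy hA hB z hz hzA)
end

section
/- Let T be a finite tree with weight function w: V(T) → ℕ, total weight g ≥ 2, with every weight-0 vertex of degree ≥ 3. Suppose no vertex of T is central. Then there exists an edge e of T such that both connected components of T − e have total weight exactly g/2 (in particular g is even). -/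
open Finset

section Aux

open SimpleGraph

set_option linter.unusedSectionVars false

variable {V : Type} [Fintype V] [DecidableEq V]

/-- transport a predicate along a walk -/
lemma walk_ind {G' : SimpleGraph V} {P : V → Prop}
    (h : ∀ a b, G'.Adj a b → P a → P b) :
    ∀ {a b : V}, G'.Walk a b → P a → P b := by
  intro a b p
  induction p with
  | nil => exact id
  | cons h' q ih => intro hpa; exact ih (h _ _ h' hpa)

/-- the component of `y` in `T - xy` -/
noncomputable def eComp (G : SimpleGraph V) (x y : V) : Finset V :=
  @Finset.filter _ (fun v => (G.deleteEdges {s(x,y)}).Reachable y v)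
    (Classical.decPred _) Finset.univ

lemma mem_eComp {G : SimpleGraph V} {x y v : V} :
    v ∈ eComp G x y ↔ (G.deleteEdges {s(x,y)}).Reachable y v := by
  classical
  simp [eComp]

lemma self_mem_eComp {G : SimpleGraph V} {x y : V} : y ∈ eComp G x y :=
  mem_eComp.mpr (Reachable.refl y)

lemma not_reach_of_tree {G : SimpleGraph V} (hT : G.IsTree) {x y : V}
    (hadj : G.Adj x y) : ¬ (G.deleteEdges {s(x,y)}).Reachable x y := by
  have hb : G.IsBridge s(x,y) :=
    (isAcyclic_iff_forall_adj_isBridge.mp hT.IsAcyclic) hadj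
  exact isBridge_iff.mp hb

lemma not_mem_eComp {G : SimpleGraph V} (hT : G.IsTree) {x y : V}
    (hadj : G.Adj x y) : x ∉ eComp G x y := by
  intro hx
  exact not_reach_of_tree hT hadj (mem_eComp.mp hx).symm

lemma eComp_closed {G : SimpleGraph V} {x y u v : V} (hu : u ∈ eComp G x y)
    (ha : G.Adj u v) (hne : s(u,v) ≠ s(x,y)) : v ∈ eComp G x y := by
  refine mem_eComp.mpr ((mem_eComp.mp hu).trans (Adj.reachable ?_))
  rw [deleteEdges_adj]
  exact ⟨ha, by simpa using hne⟩

lemma eComp_cover {G : SimpleGraph V} (hC : G.Connected) (x y : V) (v : V) :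
    v ∈ eComp G x y ∨ v ∈ eComp G y x := by
  have hyx : s(y,x) = s(x,y) := Sym2.eq_swap
  obtain ⟨p⟩ := hC.preconnected y v
  refine walk_ind (P := fun v => v ∈ eComp G x y ∨ v ∈ eComp G y x) ?_ p
    (Or.inl self_mem_eComp)
  intro a b hab hpa
  by_cases hne : s(a,b) = s(x,y)
  · rcases Sym2.eq_iff.mp hne with ⟨rfl, rfl⟩ | ⟨rfl, rfl⟩
    · exact Or.inl self_mem_eComp
    · exact Or.inr self_mem_eComp
  · rcases hpa with h | h
    · exact Or.inl (eComp_closed h hab hne)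
    · exact Or.inr (eComp_closed h hab (by rw [hyx]; exact hne))

lemma eComp_compl {G : SimpleGraph V} (hT : G.IsTree) {x y : V}
    (hadj : G.Adj x y) : eComp G y x = (eComp G x y)ᶜ := by
  have hyx : s(y,x) = s(x,y) := Sym2.eq_swap
  ext v
  simp only [Finset.mem_compl]
  constructor
  · intro hv hv'
    have h1 := mem_eComp.mp hv
    have h2 := mem_eComp.mp hv'
    rw [hyx] at h1
    exact not_reach_of_tree hT hadj (h1.trans h2.symm)
  · intro hv
    rcases eComp_cover hT.isConnected x y v with h | h
    · exact absurd h hv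
    · exact h

lemma closed_eq_univ {G : SimpleGraph V} (hC : G.Connected) {S : Finset V}
    (hne : S.Nonempty) (hcl : ∀ u ∈ S, ∀ v, G.Adj u v → v ∈ S) :
    ∀ v, v ∈ S := by
  obtain ⟨u0, hu0⟩ := hne
  intro v
  obtain ⟨p⟩ := hC.preconnected u0 v
  exact walk_ind (fun a b hab ha => hcl a ha b hab) p hu0

lemma comp_eq {G : SimpleGraph V} (hT : G.IsTree) {x y : V} {S : Finset V}
    (hS : IsComplComponent G x S) (hadj : G.Adj x y) (hy : y ∈ S) :
    S = eComp G x y := by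
  obtain ⟨hxS, hSne, hconn, hclosed⟩ := hS
  apply subset_antisymm
  · intro u hu
    obtain ⟨p⟩ := hconn.preconnected ⟨y, hy⟩ ⟨u, hu⟩
    have key : ∀ (a b : ↑(S : Set V)), (G.induce (S : Set V)).Adj a b →
        (G.deleteEdges {s(x,y)}).Adj ↑a ↑b := by
      intro a b hab
      rw [deleteEdges_adj]
      refine ⟨hab, ?_⟩
      simp only [Set.mem_singleton_iff]
      intro h
      rcases Sym2.eq_iff.mp h with ⟨h1, h2⟩ | ⟨h1, h2⟩
      · exact hxS (by rw [← h1]; exact_mod_cast a.2)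
      · exact hxS (by rw [← h2]; exact_mod_cast b.2)
    let f : (G.induce (S : Set V)) →g (G.deleteEdges {s(x,y)}) :=
      ⟨Subtype.val, fun {a b} hab => key a b hab⟩
    have hr := Reachable.map f ⟨p⟩
    exact mem_eComp.mpr hr
  · intro u hu
    obtain ⟨p⟩ := mem_eComp.mp hu
    refine (walk_ind (G' := G.deleteEdges {s(x,y)})
      (P := fun v => v ∈ S ∧ (G.deleteEdges {s(x,y)}).Reachable y v) ?_ p
      ⟨hy, Reachable.refl y⟩).1
    intro a b hab ⟨haS, har⟩
    have hbr : (G.deleteEdges {s(x,y)}).Reachable y b := har.trans hab.reachable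
    have hbx : b ≠ x := by
      rintro rfl
      exact not_reach_of_tree hT hadj hbr.symm
    exact ⟨hclosed a haS b (deleteEdges_adj.mp hab).1 hbx, hbr⟩

end Aux

/-- a finite weighted tree of total weight `g ≥ 2`, in which every
weight-0 vertex has degree `≥ 3`, and which has no central vertex, has an edge `e`
such that both connected components of `T − e` have total weight exactly `g/2`
(in particular `g` is even). Here `S` is the vertex set of the component of one
endpoint of the deleted edge: it is closed under adjacency except along `e`. -/
theorem tree_half_weight_edge {V : Type} [Fintype V] [DecidableEq V]
    (G : SimpleGraph V) [DecidableRel G.Adj] (hT : G.IsTree) (w : V → ℕ)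
    (hg : 2 ≤ ∑ v, w v) (hdeg : ∀ v : V, w v = 0 → 3 ≤ G.degree v)
    (hnc : ∀ x : V, ¬ IsCentralVertex G w x) :
    (∃ x y : V, G.Adj x y ∧ ∃ S : Finset V, x ∈ S ∧ y ∉ S ∧
        (∀ u v : V, G.Adj u v → s(u, v) ≠ s(x, y) → (u ∈ S ↔ v ∈ S)) ∧
        2 * ∑ v ∈ S, w v = ∑ v, w v ∧ 2 * ∑ v ∈ Sᶜ, w v = ∑ v, w v) ∧
      Even (∑ v, w v) := by
  classical
  by_cases hex : ∃ a b : V, G.Adj a b ∧ 2 * ∑ v ∈ eComp G a b, w v = ∑ v, w v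
  · obtain ⟨a, b, hab, hsum⟩ := hex
    have hsplit := Finset.sum_add_sum_compl (eComp G a b) w
    refine ⟨⟨b, a, hab.symm, eComp G a b, self_mem_eComp, not_mem_eComp hT hab,
      ?_, hsum, by omega⟩, ⟨∑ v ∈ eComp G a b, w v, by omega⟩⟩
    intro u v huv hne
    have h1 : s(u, v) ≠ s(a, b) := by
      intro h; exact hne (h.trans Sym2.eq_swap)
    have h2 : s(v, u) ≠ s(a, b) := by
      intro h; exact h1 (Sym2.eq_swap.trans h)
    exact ⟨fun hu => eComp_closed hu huv h1,
      fun hv => eComp_closed hv huv.symm h2⟩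
  · exfalso
    push_neg at hex
    have horient : ∀ e ∈ G.edgeFinset, ∃ p : V × V, s(p.1, p.2) = e ∧
        G.Adj p.1 p.2 ∧ (∑ v, w v) < 2 * ∑ v ∈ eComp G p.1 p.2, w v := by
      intro e
      induction e using Sym2.ind with
      | _ a b =>
        intro he
        have hab : G.Adj a b := (SimpleGraph.mem_edgeFinset.mp he)
        have hcompl : eComp G b a = (eComp G a b)ᶜ := eComp_compl hT hab
        have hsplit := Finset.sum_add_sum_compl (eComp G a b) w
        have h1 := hex a b hab
        have h2 := hex b a hab.symm
        rw [hcompl] at h2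
        by_cases hbig : (∑ v, w v) < 2 * ∑ v ∈ eComp G a b, w v
        · exact ⟨(a, b), rfl, hab, hbig⟩
        · refine ⟨(b, a), Sym2.eq_swap, hab.symm, ?_⟩
          rw [hcompl]
          omega
    choose f hf1 hf2 hf3 using horient
    set T : Finset V := G.edgeFinset.attach.image (fun e => (f e.1 e.2).1)
      with hTdef
    have hcardE : G.edgeFinset.card + 1 = Fintype.card V := hT.card_edgeFinset
    have hcard : T.card < Fintype.card V := by
      calc T.card ≤ G.edgeFinset.attach.card := Finset.card_image_le
        _ = G.edgeFinset.card := Finset.card_attach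
        _ < Fintype.card V := by omega
    have hxex : ∃ x : V, x ∉ T := by
      by_contra hall
      push_neg at hall
      have : (Finset.univ : Finset V) ⊆ T := fun x _ => hall x
      have := Finset.card_le_card this
      rw [Finset.card_univ] at this
      omega
    obtain ⟨x, hxT⟩ := hxex
    have := hnc x
    unfold IsCentralVertex at this
    push_neg at this
    obtain ⟨S, hS, hge⟩ := this
    obtain ⟨hxS, hSne, hconn, hclosed⟩ := hS
    have hy : ∃ y ∈ S, G.Adj x y := by
      by_contra h
      push_neg at h
      have hcl : ∀ u ∈ S, ∀ v, G.Adj u v → v ∈ S := by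
        intro u hu v huv
        by_cases hvx : v = x
        · exact absurd (hvx ▸ huv).symm (h u hu)
        · exact hclosed u hu v huv hvx
      exact hxS (closed_eq_univ hT.isConnected hSne hcl x)
    obtain ⟨y, hyS, hxy⟩ := hy
    have hSeq : S = eComp G x y := comp_eq hT ⟨hxS, hSne, hconn, hclosed⟩ hxy hyS
    have hemem : s(x, y) ∈ G.edgeFinset := SimpleGraph.mem_edgeFinset.mpr hxy
    have hmemT : (f s(x,y) hemem).1 ∈ T := by
      rw [hTdef]
      exact Finset.mem_image.mpr ⟨⟨s(x,y), hemem⟩, Finset.mem_attach _ _, rfl⟩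
    have hne1 : (f s(x,y) hemem).1 ≠ x := fun h => hxT (h ▸ hmemT)
    have heq := hf1 s(x,y) hemem
    have hheavy := hf3 s(x,y) hemem
    rcases Sym2.eq_iff.mp heq with ⟨h1, h2⟩ | ⟨h1, h2⟩
    · exact hne1 h1
    · rw [h1, h2] at hheavy
      rw [eComp_compl hT hxy] at hheavy
      rw [hSeq] at hge
      have hsplit := Finset.sum_add_sum_compl (eComp G x y) w
      omega
end
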